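/- Let S be an additively idempotent semiring. The map D : UTM_n(S) → UTM_n(S) that replaces all diagonal entries of A by zero (D(A)_{ij} = a_{ij} for i < j, D(A)_{ii} = 0) is a derivation, and D equals the sum over k = 1,…,n−1 of the maps A ↦ D̄_k·A·D_{n−k}. -/

import Mathlib

/-- `D̄_k = E₁₁ + ⋯ + E_kk`. -/
def Dbar (n k : ℕ) (S : Type*) [Semiring S] : Matrix (Fin n) (Fin n) S :=
  Matrix.diagonal fun i => if (i : ℕ) < k then 1 else 0

/-- `D_m = E_{n-m+1,n-m+1} + ⋯ + E_nn`. -/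
def Dlow (n m : ℕ) (S : Type*) [Semiring S] : Matrix (Fin n) (Fin n) S :=
  Matrix.diagonal fun i => if n - m ≤ (i : ℕ) then 1 else 0

/-- The map that replaces all diagonal entries of `A` by zero. -/
def offDiag {n : ℕ} {S : Type*} [Semiring S] (A : Matrix (Fin n) (Fin n) S) :
    Matrix (Fin n) (Fin n) S :=
  Matrix.of fun i j => if i = j then 0 else A i j

lemma sum_idem {α : Type*} {S : Type*} [AddCommMonoid S]
    (hS : ∀ a : S, a + a = a) (s : Finset α) (hs : s.Nonempty) (a : S) :
    ∑ _ ∈ s, a = a := by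
  rw [Finset.sum_const]
  obtain ⟨m, hm⟩ : ∃ m, s.card = m + 1 := by
    have := Finset.card_pos.mpr hs
    exact ⟨s.card - 1, by omega⟩
  have key : ∀ m : ℕ, (m + 1) • a = a := by
    intro m
    induction m with
    | zero => simp
    | succ m ih => rw [succ_nsmul, ih, hS]
  rw [hm]; exact key m

theorem stmt14 {n : ℕ} {S : Type*} [Semiring S]
    (hS : ∀ a : S, a + a = a) :
    (∀ A B : Matrix (Fin n) (Fin n) S, offDiag (A + B) = offDiag A + offDiag B) ∧
    (∀ A B : Matrix (Fin n) (Fin n) S,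
      (∀ i j : Fin n, (j : ℕ) < (i : ℕ) → A i j = 0) →
      (∀ i j : Fin n, (j : ℕ) < (i : ℕ) → B i j = 0) →
      offDiag (A * B) = offDiag A * B + A * offDiag B) ∧
    (∀ A : Matrix (Fin n) (Fin n) S,
      (∀ i j : Fin n, (j : ℕ) < (i : ℕ) → A i j = 0) →
      offDiag A = ∑ k ∈ Finset.Icc 1 (n - 1), Dbar n k S * A * Dlow n (n - k) S) := by
  refine ⟨?_, ?_, ?_⟩
  · intro A B
    ext i j
    simp only [offDiag, Matrix.of_apply, Matrix.add_apply]
    split_ifs <;> simp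
  · intro A B hA hB
    ext i j
    simp only [offDiag, Matrix.of_apply, Matrix.add_apply, Matrix.mul_apply,
      ← Finset.sum_add_distrib]
    by_cases hij : i = j
    · subst hij
      rw [if_pos rfl]
      refine (Finset.sum_eq_zero ?_).symm
      intro k _
      rcases lt_trichotomy (k : ℕ) (i : ℕ) with h | h | h
      · have h1 : A i k = 0 := hA i k h
        have hki : ¬ (i = k) := fun e => by simp [e] at h
        have hki' : ¬ (k = i) := fun e => hki e.symm
        simp [hki, hki', h1]
      · have : i = k := Fin.ext h.symm
        subst this
        simp
      · have h1 : B k i = 0 := hB k i h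
        have hki : ¬ (k = i) := fun e => by simp [e] at h
        have hki' : ¬ (i = k) := fun e => hki e.symm
        simp [hki, hki', h1]
    · rw [if_neg hij]
      refine (Finset.sum_congr rfl ?_).symm
      intro k _
      by_cases hik : i = k
      · subst hik
        rw [if_pos rfl, zero_mul, zero_add, if_neg hij]
      · by_cases hkj : k = j
        · subst hkj
          rw [if_pos rfl, mul_zero, add_zero, if_neg hik]
        · rw [if_neg hik, if_neg hkj]
          exact hS _
  · intro A hA
    ext i j
    rw [Matrix.sum_apply]
    simp only [offDiag, Matrix.of_apply, Dbar, Dlow, Matrix.mul_diagonal,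
      Matrix.diagonal_mul]
    have hterm : ∀ k ∈ Finset.Icc 1 (n - 1),
        (if (i : ℕ) < k then (1 : S) else 0) * A i j *
          (if n - (n - k) ≤ (j : ℕ) then (1 : S) else 0) =
        (if (i : ℕ) < k ∧ k ≤ (j : ℕ) then A i j else 0) := by
      intro k hk
      simp only [Finset.mem_Icc] at hk
      have hkn : n - (n - k) = k := by omega
      rw [hkn]
      split_ifs <;> simp_all
    rw [Finset.sum_congr rfl hterm, ← Finset.sum_filter]
    by_cases hij : i = j
    · subst hij
      rw [if_pos rfl]
      refine (Finset.sum_eq_zero ?_).symm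
      intro k hk
      simp only [Finset.mem_filter] at hk
      omega
    · rw [if_neg hij]
      rcases lt_or_gt_of_ne (fun e : (i : ℕ) = (j : ℕ) => hij (Fin.ext e)) with h | h
      · refine (sum_idem hS _ ⟨(j : ℕ), ?_⟩ _).symm
        simp only [Finset.mem_filter, Finset.mem_Icc]
        have := j.isLt
        omega
      · rw [hA i j h]
        exact (Finset.sum_eq_zero fun k _ => rfl).symm
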